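/- arXiv:2305.06736 — 2 statements merged into one kernel-verified Lean document; each statement's English description precedes it below -/
import Mathlib

section
/- Let T be a nonempty Hausdorff compact topological space and h : ℝ^p × T → ℝ, f : ℝ^p → ℝ. Assume x̂ ∈ Ω (Ω open in ℝ^p) maximizes f over { x ∈ Ω : h(x,t) ≥ 0 for all t ∈ T }, and that: (a) T(x̂) := { t ∈ T : h(x̂,t) = 0 } is nonempty; (b) f is Gateaux differentiable at x̂ and the family (h(·,t))_{t∈T} is equi-Gateaux differentiable at x̂ with differentials ∇_x h(x̂,t); (c) the family (h(·,t))_{t ∈ T \ T(x̂)} is equi-lower semicontinuous at x̂; (d) t ↦ h(x̂,t) and t ↦ ∇_x h(x̂,t) are continuous. Then there exist λ_0, …, λ_k ≥ 0 and t_1, …, t_k ∈ T(x̂) with k ≤ p and λ_0 + ⋯ + λ_k = 1 such that λ_0 d_Gf(x̂) + Σ_{i=1}^k λ_i ∇_x h(x̂, t_i) = 0. If moreover 0 ∉ conv{ ∇_x h(x̂,t) : t ∈ T(x̂) }, then λ_0 ≠ 0. -/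
open Topology Filter Set

noncomputable section

section Defs

variable {E : Type*} [AddCommGroup E] [Module ℝ E] [TopologicalSpace E]

/-- The canonical map from the topological dual of `E` to the weak-star dual. -/
def toWD (φ : E →L[ℝ] ℝ) : WeakDual ℝ E := φ

/-- The weak-star closed convex hull of a set of continuous linear functionals. -/
def wcch (B : Set (E →L[ℝ] ℝ)) : Set (WeakDual ℝ E) :=
  closure (convexHull ℝ (toWD '' B))

/-- `f` is Gateaux differentiable at `x` with Gateaux-differential `f'`. -/
def HasGateauxAt (f : E → ℝ) (f' : E →L[ℝ] ℝ) (x : E) : Prop :=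
  ∀ v : E, Tendsto (fun t : ℝ => (f (x + t • v) - f x - t * f' v) / t) (𝓝[>] 0) (𝓝 0)

/-- The family `C` is equi-Gateaux differentiable at `x`, with differentials given by `D`. -/
def EquiGateauxAt (C : Set (E → ℝ)) (D : (E → ℝ) → E →L[ℝ] ℝ) (x : E) : Prop :=
  (∀ φ ∈ C, HasGateauxAt φ (D φ) x) ∧
  ∀ v : E, ∀ ε : ℝ, 0 < ε → ∃ δ : ℝ, 0 < δ ∧ ∀ t : ℝ, 0 < t → t < δ →
    ∀ φ ∈ C, |(φ (x + t • v) - φ x - t * (D φ) v) / t| ≤ ε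

/-- The family `C` is equi-lower semicontinuous at `x`. -/
def EquiLscAt (C : Set (E → ℝ)) (x : E) : Prop :=
  ∀ ε : ℝ, 0 < ε → ∃ O ∈ 𝓝 x, ∀ y ∈ O, ∀ φ ∈ C, φ y - φ x > -ε

/-- `[C]^× = {x ∈ E : φ(x) ≥ 0 for all φ ∈ C}`. -/
def polarSet (C : Set (E → ℝ)) : Set E := {x | ∀ φ ∈ C, 0 ≤ φ x}

/-- The multiplier set `T_C(x̂)`. -/
def multSet (C : Set (E → ℝ)) (D : (E → ℝ) → E →L[ℝ] ℝ) (x : E) : Set (WeakDual ℝ E) :=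
  ⋂ n ∈ {n : ℕ | 1 ≤ n}, wcch (D '' {φ | φ ∈ C ∧ φ x ∈ Icc (0:ℝ) (1/(n:ℝ))})

/-- `F` is weak-admissible at `x ∈ F`, determined by `C` (with differentials `D`). -/
def WeakAdmissibleAt (F : Set E) (C : Set (E → ℝ)) (D : (E → ℝ) → E →L[ℝ] ℝ) (x : E) : Prop :=
  x ∈ F ∧ C.Nonempty ∧ F = polarSet C ∧ EquiGateauxAt C D x ∧
    ({φ | φ ∈ C ∧ φ x ≠ 0} = ∅ ∨ EquiLscAt {φ | φ ∈ C ∧ φ x ≠ 0} x) ∧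
    IsCompact (wcch (D '' C))

end Defs

section NormedDefs

variable {Y : Type*} [NormedAddCommGroup Y] [NormedSpace ℝ Y]

/-- `A` is admissible at `x ∈ A`, determined by `C` (with differentials `D`). -/
def AdmissibleAt (A : Set Y) (C : Set (Y → ℝ)) (D : (Y → ℝ) → Y →L[ℝ] ℝ) (x : Y) : Prop :=
  x ∈ A ∧ C.Nonempty ∧ A = polarSet C ∧ EquiGateauxAt C D x ∧
    (∃ r : NNReal, ∃ ε : ℝ, 0 < ε ∧ ∀ φ ∈ C, LipschitzOnWith r φ (Metric.ball x ε)) ∧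
    toWD (0 : Y →L[ℝ] ℝ) ∉ wcch (D '' C)

/-- The recession cone of a set. -/
def recCone (K : Set Y) : Set Y := {v | ∀ l : ℝ, 0 < l → ∀ x ∈ K, x + l • v ∈ K}

/-- The barrier cone of `K`: functionals bounded above on `K`. -/
def barCone (K : Set Y) : Set (Y →L[ℝ] ℝ) := {φ | BddAbove (φ '' K)}

/-- The dual positive cone `A*`. -/
def posDualCone (A : Set Y) : Set (Y →L[ℝ] ℝ) := {φ | ∀ y ∈ A, 0 ≤ φ y}

end NormedDefs


section Aux
variable {V : Type*} [AddCommGroup V] [Module ℝ V]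



lemma pack_lemma {p : ℕ} (A : Set V) (f' : V)
    {ι : Type*} [Fintype ι] (hcard : Fintype.card ι ≤ p)
    (z : ι → V) (hz : ∀ i, z i ∈ A) (ε : ℝ) (d : ι → ℝ)
    (hε : 0 ≤ ε) (hd : ∀ i, 0 ≤ d i) (hsum : ε + ∑ i, d i = 1)
    (hcomb : ε • f' + ∑ i, d i • z i = 0)
    (hclause : (0:V) ∉ convexHull ℝ A → ε ≠ 0) :
    ∃ k : ℕ, k ≤ p ∧ ∃ (l0 : ℝ) (l : Fin k → ℝ) (a : Fin k → V),
      0 ≤ l0 ∧ (∀ i, 0 ≤ l i) ∧ (∀ i, a i ∈ A) ∧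
      l0 + ∑ i, l i = 1 ∧ l0 • f' + ∑ i, l i • a i = 0 ∧
      ((0:V) ∉ convexHull ℝ A → l0 ≠ 0) := by
  have e := (Fintype.equivFin ι).symm
  refine ⟨Fintype.card ι, hcard, ε, d ∘ e, z ∘ e, hε, fun i => hd _, fun i => hz _, ?_, ?_, hclause⟩
  · rw [← hsum]; congr 1; exact Equiv.sum_comp e d
  · rw [← hcomb]; congr 1; exact Equiv.sum_comp e (fun j => d j • z j)


lemma carath_zero {p : ℕ} [FiniteDimensional ℝ V] (hrank : Module.finrank ℝ V = p)
    (A : Set V) (f' : V) (h0 : (0:V) ∈ convexHull ℝ (insert f' A)) :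
    ∃ k : ℕ, k ≤ p ∧ ∃ (l0 : ℝ) (l : Fin k → ℝ) (a : Fin k → V),
      0 ≤ l0 ∧ (∀ i, 0 ≤ l i) ∧ (∀ i, a i ∈ A) ∧
      l0 + ∑ i, l i = 1 ∧ l0 • f' + ∑ i, l i • a i = 0 ∧
      ((0:V) ∉ convexHull ℝ A → l0 ≠ 0) := by
  classical
  obtain ⟨ι, hft, z, w, hrange, haff, hwpos, hwsum, hwcomb⟩ :=
    eq_pos_convex_span_of_mem_convexHull h0
  have hc : Fintype.card ι ≤ p + 1 := by
    refine haff.card_le_finrank_succ.trans ?_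
    have := Submodule.finrank_le (vectorSpan ℝ (Set.range z))
    omega
  by_cases hall : ∀ i, z i ∈ A
  · -- all points are in A
    have h0A : (0:V) ∈ convexHull ℝ A := by
      rw [← hwcomb]
      exact Convex.sum_mem (convex_convexHull ℝ A) (fun i _ => (hwpos i).le)
        hwsum (fun i _ => subset_convexHull ℝ A (hall i))
    rcases Nat.lt_or_ge (Fintype.card ι) (p+1) with hlt | hge
    · exact pack_lemma A f' (Nat.lt_succ_iff.mp hlt) z hall 0 w le_rfl
        (fun i => (hwpos i).le) (by simpa using hwsum) (by simpa using hwcomb)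
        (fun hcl => absurd h0A hcl)
    · -- card = p + 1 : juggling
      have hcard : Fintype.card ι = p + 1 := le_antisymm hc hge
      -- span of range z is everything
      have hvs : vectorSpan ℝ (Set.range z) = ⊤ := by
        apply Submodule.eq_top_of_finrank_eq
        rw [haff.finrank_vectorSpan hcard, hrank]
      have hspan : Submodule.span ℝ (Set.range z) = ⊤ := by
        rw [eq_top_iff, ← hvs, vectorSpan_def]
        refine Submodule.span_le.2 ?_
        rintro x ⟨a, ⟨i, rfl⟩, b, ⟨j, rfl⟩, rfl⟩
        exact sub_mem (Submodule.subset_span ⟨i, rfl⟩) (Submodule.subset_span ⟨j, rfl⟩)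
      have hmem : -f' ∈ Submodule.span ℝ (Set.range z) := hspan ▸ Submodule.mem_top
      rw [Submodule.mem_span_range_iff_exists_fun] at hmem
      obtain ⟨c₀, hc₀⟩ := hmem
      -- get coefficients with a negative entry
      obtain ⟨c, hcsum, i1, hci1⟩ :
          ∃ c : ι → ℝ, (∑ i, c i • z i = -f') ∧ ∃ i, c i < 0 := by
        by_cases hneg : ∃ i, c₀ i < 0
        · exact ⟨c₀, hc₀, hneg⟩
        · push_neg at hneg
          have hld : ¬ LinearIndependent ℝ z := by
            intro h
            have := h.fintype_card_le_finrank
            omega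
          obtain ⟨g, hg, i1, hgi1⟩ := Fintype.not_linearIndependent_iff.mp hld
          obtain ⟨e, he, hei1⟩ : ∃ e : ι → ℝ, (∑ i, e i • z i = 0) ∧ e i1 < 0 := by
            rcases hgi1.lt_or_gt with h1 | h1
            · exact ⟨g, hg, h1⟩
            · exact ⟨-g, by simpa [neg_smul] using congrArg Neg.neg hg, by simpa using h1⟩
          refine ⟨fun i => c₀ i + ((|c₀ i1| + 1)/(-e i1)) * e i, ?_, i1, ?_⟩
          · rw [Finset.sum_congr rfl (fun i _ => add_smul (c₀ i) _ (z i)),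
              Finset.sum_add_distrib, hc₀]
            have : ∑ i, (((|c₀ i1| + 1)/(-e i1)) * e i) • z i
                = ((|c₀ i1| + 1)/(-e i1)) • ∑ i, e i • z i := by
              rw [Finset.smul_sum]
              exact Finset.sum_congr rfl fun i _ => by rw [smul_smul]
            rw [this, he, smul_zero, add_zero]
          · have hne : e i1 ≠ 0 := hei1.ne
            have hkey : ((|c₀ i1| + 1)/(-e i1)) * e i1 = -(|c₀ i1| + 1) := by
              rw [div_mul_eq_mul_div, mul_div_assoc, div_neg, div_self hne, mul_neg_one]
            show c₀ i1 + (|c₀ i1| + 1) / -e i1 * e i1 < 0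
            rw [hkey]
            have := le_abs_self (c₀ i1)
            linarith
      -- the minimizing index
      set neg : Finset ι := Finset.univ.filter (fun i => c i < 0) with hnegdef
      have hnegne : neg.Nonempty := ⟨i1, by simp [hnegdef, hci1]⟩
      obtain ⟨j, hjmem, hjmin⟩ := Finset.exists_min_image neg (fun i => w i / (-c i)) hnegne
      have hcj : c j < 0 := by simpa [hnegdef] using hjmem
      set ε : ℝ := w j / (-c j) with hεdef
      have hεpos : 0 < ε := div_pos (hwpos j) (by linarith)
      set d : ι → ℝ := fun i => w i + ε * c i with hddef
      have hd : ∀ i, 0 ≤ d i := by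
        intro i
        rcases le_or_gt 0 (c i) with h | h
        · have : 0 ≤ ε * c i := mul_nonneg hεpos.le h
          simp only [hddef]; linarith [(hwpos i).le]
        · have hi : i ∈ neg := by simp [hnegdef, h]
          have := hjmin i hi
          rw [hεdef] at *
          have h1 : w j / (-c j) * (-c i) ≤ w i := by
            rw [← le_div_iff₀ (by linarith : (0:ℝ) < -c i)]
            exact this
          simp only [hddef, hεdef]
          linarith
      have hdj : d j = 0 := by
        show w j + (w j / -c j) * c j = 0
        rw [div_mul_eq_mul_div, mul_div_assoc, div_neg, div_self hcj.ne, mul_neg_one]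
        exact add_neg_cancel (w j)
      have hcomb : ε • f' + ∑ i, d i • z i = 0 := by
        have : ∑ i, d i • z i = (∑ i, w i • z i) + ε • ∑ i, c i • z i := by
          rw [Finset.smul_sum]
          rw [← Finset.sum_add_distrib]
          exact Finset.sum_congr rfl fun i _ => by
            simp only [hddef]; rw [add_smul, smul_smul]
        rw [this, hwcomb, hcsum, zero_add, smul_neg, add_neg_cancel]
      set τ : ℝ := ε + ∑ i, d i with hτdef
      have hτpos : 0 < τ := by
        have : 0 ≤ ∑ i, d i := Finset.sum_nonneg fun i _ => hd i
        simp only [hτdef]; linarith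
      -- sums over the complement of j
      have hsum' : ∑ i : {i // i ≠ j}, d ↑i = ∑ i, d i := by
        rw [Fintype.sum_eq_add_sum_compl j d, hdj, zero_add]
        exact (Finset.sum_subtype _ (by simp) d).symm
      have hcomb' : ∑ i : {i // i ≠ j}, d ↑i • z ↑i = ∑ i, d i • z i := by
        rw [Fintype.sum_eq_add_sum_compl j (fun i => d i • z i), hdj, zero_smul, zero_add]
        exact (Finset.sum_subtype _ (by simp) (fun i => d i • z i)).symm
      have hcard' : Fintype.card {i // i ≠ j} ≤ p := by
        have : Fintype.card {i // i ≠ j} = Fintype.card ι - 1 := by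
          simp [Fintype.card_subtype_compl, Fintype.card_subtype_eq]
        omega
      refine pack_lemma A f' hcard' (fun i => z ↑i) (fun i => hall _) (ε/τ)
        (fun i => d ↑i / τ) (div_nonneg hεpos.le hτpos.le)
        (fun i => div_nonneg (hd _) hτpos.le) ?_ ?_
        (fun hcl => absurd h0A hcl)
      · show ε / τ + ∑ i : {i // i ≠ j}, d ↑i / τ = 1
        rw [← Finset.sum_div, hsum', ← add_div, ← hτdef, div_self hτpos.ne']
      · show (ε / τ) • f' + ∑ i : {i // i ≠ j}, (d ↑i / τ) • z ↑i = 0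
        have h2 : ∑ i : {i // i ≠ j}, (d ↑i / τ) • z ↑i
            = (τ⁻¹) • ∑ i : {i // i ≠ j}, d ↑i • z ↑i := by
          rw [Finset.smul_sum]
          exact Finset.sum_congr rfl fun i _ => by
            rw [smul_smul, div_eq_inv_mul]
        rw [h2, hcomb', eq_neg_of_add_eq_zero_right hcomb, smul_neg, smul_smul,
          div_eq_inv_mul, add_neg_cancel]
  · -- some point is f' (and f' ∉ A)
    push_neg at hall
    obtain ⟨i0, hi0⟩ := hall
    have hzi0 : z i0 = f' := by
      rcases hrange ⟨i0, rfl⟩ with h | h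
      · exact h
      · exact absurd h hi0
    have hf'A : f' ∉ A := hzi0 ▸ hi0
    have hzA : ∀ i : {i // i ≠ i0}, z ↑i ∈ A := by
      rintro ⟨i, hi⟩
      rcases hrange ⟨i, rfl⟩ with h | h
      · exact absurd (haff.injective (h.trans hzi0.symm)) hi
      · exact h
    have hcard' : Fintype.card {i // i ≠ i0} ≤ p := by
      have : Fintype.card {i // i ≠ i0} = Fintype.card ι - 1 := by
        simp [Fintype.card_subtype_compl, Fintype.card_subtype_eq]
      omega
    refine pack_lemma A f' hcard' (fun i => z ↑i) hzA (w i0) (fun i => w ↑i)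
      (hwpos i0).le (fun i => (hwpos ↑i).le) ?_ ?_ (fun _ => (hwpos i0).ne')
    · rw [← hwsum, Fintype.sum_eq_add_sum_compl i0 w]
      congr 1
      exact (Finset.sum_subtype _ (by simp) w).symm
    · rw [← hwcomb, Fintype.sum_eq_add_sum_compl i0 (fun i => w i • z i), hzi0]
      congr 1
      exact (Finset.sum_subtype _ (by simp) (fun i => w i • z i)).symm
end Aux


lemma isCompact_convexHull_fd {V : Type*} [NormedAddCommGroup V] [NormedSpace ℝ V]
    [FiniteDimensional ℝ V] {S : Set V} (hS : IsCompact S) :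
    IsCompact (convexHull ℝ S) := by
  classical
  rcases S.eq_empty_or_nonempty with rfl | ⟨s0, hs0⟩
  · simp
  set n := Module.finrank ℝ V + 1 with hn
  set F : ((Fin n → ℝ) × (Fin n → V)) → V := fun q => ∑ i, q.1 i • q.2 i with hF
  have hFc : Continuous F := by
    apply continuous_finset_sum
    intro i _
    exact ((continuous_apply i).comp continuous_fst).smul
      ((continuous_apply i).comp continuous_snd)
  set K : Set ((Fin n → ℝ) × (Fin n → V)) :=
    (stdSimplex ℝ (Fin n)) ×ˢ (Set.pi univ fun _ : Fin n => S) with hK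
  have hKc : IsCompact K := (isCompact_stdSimplex _ _).prod (isCompact_univ_pi fun _ => hS)
  have himg : convexHull ℝ S = F '' K := by
    apply Subset.antisymm
    · intro x hx
      obtain ⟨ι, hft, z, w, hrange, haff, hwpos, hwsum, hwcomb⟩ :=
        eq_pos_convex_span_of_mem_convexHull hx
      have hcard : Fintype.card ι ≤ n := by
        refine haff.card_le_finrank_succ.trans ?_
        have := Submodule.finrank_le (vectorSpan ℝ (Set.range z))
        omega
      obtain ⟨e⟩ : Nonempty (ι ↪ Fin n) := by
        rw [Function.Embedding.nonempty_iff_card_le]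
        simpa using hcard
      set w' : Fin n → ℝ := fun j => if h : ∃ i, e i = j then w h.choose else 0 with hw'
      set x' : Fin n → V := fun j => if h : ∃ i, e i = j then z h.choose else s0 with hx'
      have hwe : ∀ i : ι, w' (e i) = w i := by
        intro i
        have h : ∃ i', e i' = e i := ⟨i, rfl⟩
        have : h.choose = i := e.injective h.choose_spec
        simp [hw', dif_pos h, this]
      have hxe : ∀ i : ι, x' (e i) = z i := by
        intro i
        have h : ∃ i', e i' = e i := ⟨i, rfl⟩
        have : h.choose = i := e.injective h.choose_spec
        simp [hx', dif_pos h, this]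
      have hsub : (Finset.univ.image e : Finset (Fin n)) ⊆ Finset.univ := Finset.subset_univ _
      have hzero : ∀ j ∈ Finset.univ, j ∉ Finset.univ.image e → w' j = 0 := by
        intro j _ hj
        have hne : ¬ ∃ i, e i = j := by
          intro ⟨i, hi⟩
          exact hj (Finset.mem_image.2 ⟨i, Finset.mem_univ i, hi⟩)
        simp only [hw']; rw [dif_neg hne]
      refine ⟨⟨w', x'⟩, ⟨?_, ?_⟩, ?_⟩
      · constructor
        · intro j
          show (0:ℝ) ≤ w' j
          by_cases h : ∃ i, e i = j
          · simp only [hw']; rw [dif_pos h]; exact (hwpos _).le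
          · simp only [hw']; rw [dif_neg h]
        · show ∑ j, w' j = 1
          rw [← Finset.sum_subset hsub (by intro j _ hj; exact hzero j (Finset.mem_univ j) hj)]
          rw [Finset.sum_image (fun a _ b _ hab => e.injective hab)]
          rw [← hwsum]
          exact Finset.sum_congr rfl fun i _ => hwe i
      · intro j _
        show x' j ∈ S
        by_cases h : ∃ i, e i = j
        · simp only [hx']; rw [dif_pos h]; exact hrange ⟨h.choose, rfl⟩
        · simp only [hx']; rw [dif_neg h]; exact hs0
      · show ∑ j, w' j • x' j = x
        have hzero' : ∀ j ∈ Finset.univ, j ∉ Finset.univ.image e → w' j • x' j = 0 := by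
          intro j hj hj'
          rw [hzero j hj hj', zero_smul]
        rw [← Finset.sum_subset hsub hzero',
          Finset.sum_image (fun a _ b _ hab => e.injective hab), ← hwcomb]
        exact Finset.sum_congr rfl fun i _ => by rw [hwe i, hxe i]
    · rintro x ⟨⟨w, xs⟩, ⟨hw, hxs⟩, rfl⟩
      exact Convex.sum_mem (convex_convexHull ℝ S) (fun i _ => hw.1 i) hw.2
        (fun i _ => subset_convexHull ℝ S (hxs i (mem_univ i)))
  rw [himg]
  exact hKc.image hFc

lemma dual_rep {p : ℕ} (g : ((Fin p → ℝ) →L[ℝ] ℝ) →L[ℝ] ℝ) (φ : (Fin p → ℝ) →L[ℝ] ℝ) :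
    g φ = φ (fun i => g (ContinuousLinearMap.proj i)) := by
  classical
  have hφ : φ = ∑ i, φ (Pi.single i 1) •
      (ContinuousLinearMap.proj i : (Fin p → ℝ) →L[ℝ] ℝ) := by
    ext x
    rw [ContinuousLinearMap.sum_apply]
    simp only [ContinuousLinearMap.smul_apply, ContinuousLinearMap.proj_apply, smul_eq_mul]
    calc φ x = φ (∑ i, x i • (Pi.single i (1:ℝ) : Fin p → ℝ)) := by
          congr 1
          ext j
          simp [Finset.sum_apply, Pi.single_apply, eq_comm]
        _ = ∑ i, x i • φ (Pi.single i (1:ℝ)) := by rw [map_sum]; simp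
        _ = ∑ i, φ (Pi.single i (1:ℝ)) * x i := by
          exact Finset.sum_congr rfl fun i _ => by rw [smul_eq_mul, mul_comm]
  conv_lhs => rw [hφ]
  rw [map_sum]
  conv_rhs => rw [hφ]
  rw [ContinuousLinearMap.sum_apply]
  refine Finset.sum_congr rfl fun i _ => ?_
  simp [mul_comm]



/-- (Semi-infinite programming multiplier rule.) If `xh ∈ Ω ⊆ ℝ^p` maximizes
`f` over `{x ∈ Ω : h(x,t) ≥ 0 ∀ t ∈ T}` with `T` compact Hausdorff nonempty, `T(xh) ≠ ∅`, `f`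
Gateaux differentiable at `xh`, the family `(h(·,t))_t` equi-Gateaux differentiable at `xh`,
`(h(·,t))_{t ∉ T(xh)}` equi-lsc at `xh`, and `t ↦ h(xh,t)`, `t ↦ ∇_x h(xh,t)` continuous, then
there are `λ_0, …, λ_k ≥ 0`, `t_1, …, t_k ∈ T(xh)`, `k ≤ p`, `λ_0 + ⋯ + λ_k = 1` with
`λ_0 d_Gf(xh) + Σ λ_i ∇_x h(xh,t_i) = 0`; and if `0 ∉ conv{∇_x h(xh,t) : t ∈ T(xh)}` then
`λ_0 ≠ 0`. -/
theorem semiInfinite_multiplier_rule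
    {p : ℕ} {T : Type*} [TopologicalSpace T] [CompactSpace T] [T2Space T] [Nonempty T]
    (Ω : Set (Fin p → ℝ)) (hΩ : IsOpen Ω)
    (h : (Fin p → ℝ) → T → ℝ) (f : (Fin p → ℝ) → ℝ)
    (xh : Fin p → ℝ) (hxΩ : xh ∈ Ω)
    (hfeas : ∀ t : T, 0 ≤ h xh t)
    (hmax : ∀ x ∈ Ω, (∀ t : T, 0 ≤ h x t) → f x ≤ f xh)
    (hTx : ∃ t : T, h xh t = 0)
    (f' : (Fin p → ℝ) →L[ℝ] ℝ) (hf : HasGateauxAt f f' xh)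
    (D : T → ((Fin p → ℝ) →L[ℝ] ℝ))
    (hdiff : ∀ t : T, HasGateauxAt (fun x => h x t) (D t) xh)
    (hequi : ∀ v : Fin p → ℝ, ∀ ε : ℝ, 0 < ε → ∃ δ : ℝ, 0 < δ ∧
      ∀ s : ℝ, 0 < s → s < δ → ∀ t : T,
        |(h (xh + s • v) t - h xh t - s * (D t) v) / s| ≤ ε)
    (hlsc : ∀ ε : ℝ, 0 < ε → ∃ O ∈ 𝓝 xh, ∀ y ∈ O, ∀ t : T, h xh t ≠ 0 →
      h y t - h xh t > -ε)
    (hcont1 : Continuous fun t : T => h xh t)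
    (hcont2 : Continuous D) :
    ∃ k : ℕ, k ≤ p ∧ ∃ (l0 : ℝ) (l : Fin k → ℝ) (t : Fin k → T),
      0 ≤ l0 ∧ (∀ i, 0 ≤ l i) ∧ (∀ i, h xh (t i) = 0) ∧
      l0 + ∑ i, l i = 1 ∧
      l0 • f' + ∑ i, l i • D (t i) = 0 ∧
      ((0 : (Fin p → ℝ) →L[ℝ] ℝ) ∉
          convexHull ℝ {q : (Fin p → ℝ) →L[ℝ] ℝ | ∃ s : T, h xh s = 0 ∧ D s = q} →
        l0 ≠ 0) := by
  classical
  set Tx : Set T := {t | h xh t = 0} with hTxdef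
  set A : Set ((Fin p → ℝ) →L[ℝ] ℝ) := D '' Tx with hAdef
  have hAeq : A = {q : (Fin p → ℝ) →L[ℝ] ℝ | ∃ s : T, h xh s = 0 ∧ D s = q} := by
    ext q
    constructor
    · rintro ⟨s, hs, rfl⟩; exact ⟨s, hs, rfl⟩
    · rintro ⟨s, hs, rfl⟩; exact ⟨s, hs, rfl⟩
  -- Key claim: 0 is in the convex hull of {f'} ∪ A
  have hkey : (0 : (Fin p → ℝ) →L[ℝ] ℝ) ∈ convexHull ℝ (insert f' A) := by
    by_contra hkey
    -- compactness of the hull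
    have hTxc : IsCompact Tx := (isClosed_singleton.preimage hcont1).isCompact
    have hSc : IsCompact (insert f' A) := (hTxc.image hcont2).insert f'
    have hhullc : IsCompact (convexHull ℝ (insert f' A)) := isCompact_convexHull_fd hSc
    obtain ⟨g, u, hg0, hgu⟩ := geometric_hahn_banach_point_closed
      (convex_convexHull ℝ _) hhullc.isClosed hkey
    have hu : 0 < u := by rw [map_zero] at hg0; exact hg0
    set v : Fin p → ℝ := fun i => g (ContinuousLinearMap.proj i) with hv
    have hrep : ∀ φ : (Fin p → ℝ) →L[ℝ] ℝ, g φ = φ v := fun φ => dual_rep g φ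
    have hf'v : u < f' v := by
      rw [← hrep]; exact hgu _ (subset_convexHull ℝ _ (mem_insert f' A))
    have hDv : ∀ t : T, h xh t = 0 → u < (D t) v := by
      intro t ht
      rw [← hrep]
      exact hgu _ (subset_convexHull ℝ _ (mem_insert_of_mem _ ⟨t, ht, rfl⟩))
    set U : Set T := {t | u/2 < (D t) v} with hU
    have hUopen : IsOpen U :=
      isOpen_lt continuous_const ((ContinuousLinearMap.apply ℝ ℝ v).continuous.comp hcont2)
    -- a neighbourhood on which constraints indexed outside U stay positive
    have hOK : ∃ O ∈ 𝓝 xh, ∀ y ∈ O, ∀ t : T, t ∉ U → 0 < h y t := by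
      by_cases hKne : ∃ t : T, t ∉ U
      · obtain ⟨tK, htK⟩ := hKne
        have hKcomp : IsCompact Uᶜ := hUopen.isClosed_compl.isCompact
        obtain ⟨t0, ht0K, hmin⟩ := hKcomp.exists_isMinOn ⟨tK, htK⟩ hcont1.continuousOn
        have hm : 0 < h xh t0 := by
          rcases (hfeas t0).lt_or_eq with h1 | h1
          · exact h1
          · exfalso
            have hgt := hDv t0 h1.symm
            exact ht0K (by simp only [hU, mem_setOf_eq]; linarith)
        obtain ⟨O, hO, hOlsc⟩ := hlsc (h xh t0) hm
        refine ⟨O, hO, fun y hy t htU => ?_⟩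
        have h1 : h xh t0 ≤ h xh t := hmin htU
        have h2 := hOlsc y hy t (by linarith : h xh t ≠ 0)
        linarith
      · push_neg at hKne
        exact ⟨univ, univ_mem, fun y _ t htU => absurd (hKne t) htU⟩
    obtain ⟨O, hOmem, hOpos⟩ := hOK
    obtain ⟨δ, hδ, hδp⟩ := hequi v (u/4) (by linarith)
    -- eventual statements on 𝓝[>] 0
    have htend : Tendsto (fun s : ℝ => xh + s • v) (𝓝[>] (0:ℝ)) (𝓝 xh) := by
      have hc : Continuous fun s : ℝ => xh + s • v :=
        continuous_const.add (continuous_id.smul continuous_const)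
      exact (hc.tendsto' 0 xh (by simp)).mono_left nhdsWithin_le_nhds
    have E0 : ∀ᶠ s in 𝓝[>] (0:ℝ), 0 < s :=
      eventually_mem_nhdsWithin.mono fun s hs => hs
    have E1 : ∀ᶠ s in 𝓝[>] (0:ℝ), xh + s • v ∈ Ω := htend.eventually_mem (hΩ.mem_nhds hxΩ)
    have E2 : ∀ᶠ s in 𝓝[>] (0:ℝ), xh + s • v ∈ O := htend.eventually_mem hOmem
    have E3 : ∀ᶠ s in 𝓝[>] (0:ℝ), s < δ :=
      eventually_of_mem (Ioo_mem_nhdsGT_of_mem ⟨le_refl (0:ℝ), hδ⟩) fun s hs => hs.2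
    have E4 : ∀ᶠ s in 𝓝[>] (0:ℝ), -u < (f (xh + s • v) - f xh - s * f' v) / s :=
      (hf v).eventually (eventually_gt_nhds (by linarith : -u < (0:ℝ)))
    obtain ⟨s, hs0, hsΩ, hsO, hsδ, hsf⟩ := (E0.and (E1.and (E2.and (E3.and E4)))).exists
    -- the perturbed point is feasible and has larger f value
    have hfx' : f xh < f (xh + s • v) := by
      have h1 : -u * s < f (xh + s • v) - f xh - s * f' v := by
        have := (lt_div_iff₀ hs0).mp hsf
        linarith
      nlinarith
    have hfeas' : ∀ t : T, 0 ≤ h (xh + s • v) t := by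
      intro t
      by_cases htU : t ∈ U
      · have habs := hδp s hs0 hsδ t
        have h1 : -(u/4) ≤ (h (xh + s • v) t - h xh t - s * (D t) v) / s :=
          neg_le_of_abs_le habs |>.trans_eq rfl
        have h2 : -(u/4) * s ≤ h (xh + s • v) t - h xh t - s * (D t) v :=
          (le_div_iff₀ hs0).mp h1
        have h3 : u/2 < (D t) v := htU
        nlinarith [hfeas t]
      · exact (hOpos _ hsO t htU).le
    linarith [hmax _ hsΩ hfeas']
  -- apply the Carathéodory lemma
  have hrank : Module.finrank ℝ ((Fin p → ℝ) →L[ℝ] ℝ) = p := by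
    rw [(LinearMap.toContinuousLinearMap :
        ((Fin p → ℝ) →ₗ[ℝ] ℝ) ≃ₗ[ℝ] ((Fin p → ℝ) →L[ℝ] ℝ)).finrank_eq.symm]
    simp [Module.finrank_linearMap]
  obtain ⟨k, hk, l0, l, a, hl0, hl, haA, hsum, hcomb, hcl⟩ := carath_zero hrank A f' hkey
  choose t ht1 ht2 using fun i => haA i
  refine ⟨k, hk, l0, l, t, hl0, hl, ht1, hsum, ?_, ?_⟩
  · rw [← hcomb]
    congr 1
    exact Finset.sum_congr rfl fun i _ => by rw [ht2 i]
  · rw [← hAeq]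
    exact hcl
end
end

section
/- Let E be a Hausdorff locally convex topological vector space, Ω ⊂ E open, (Y, ‖·‖) a normed space, and g : Ω → Y Gateaux differentiable and continuous at x̂ ∈ Ω. Let C be a family of real-valued functions on Y which is r-equi-Lipschitz at g(x̂) (all φ ∈ C are r-Lipschitz on a common ball around g(x̂)) and equi-Gateaux differentiable at g(x̂). Then: (i) the weak-star closed convex hull of { d_Gφ(g(x̂)) : φ ∈ C } is a weak-star compact subset of Y* (it is contained in the ball of radius r); (ii) the family { φ∘g : φ ∈ C } is equi-Gateaux differentiable at x̂ and d_G(φ∘g)(x̂) = d_Gφ(g(x̂)) ∘ d_Gg(x̂) for every φ ∈ C. -/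
open Topology Filter Set

noncomputable section

/-- (Chain rule for equi-Gateaux families.) If `g : Ω → Y` is Gateaux
differentiable and continuous at `xh ∈ Ω`, and `C` is `r`-equi-Lipschitz and equi-Gateaux
differentiable at `g(xh)`, then the weak-star closed convex hull of `{d_Gφ(g(xh)) : φ ∈ C}`
is weak-star compact (contained in the ball of radius `r`), the family `{φ∘g : φ ∈ C}` is
equi-Gateaux differentiable at `xh`, and `d_G(φ∘g)(xh) = d_Gφ(g(xh)) ∘ d_Gg(xh)`. -/
theorem equiGateaux_comp
    {E : Type*} [AddCommGroup E] [Module ℝ E] [TopologicalSpace E]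
    [IsTopologicalAddGroup E] [ContinuousSMul ℝ E] [LocallyConvexSpace ℝ E] [T2Space E]
    {Y : Type*} [NormedAddCommGroup Y] [NormedSpace ℝ Y]
    (Ω : Set E) (hΩ : IsOpen Ω) (xh : E) (hxΩ : xh ∈ Ω)
    (g : E → Y) (g' : E →L[ℝ] Y)
    (hg : ∀ v : E, Filter.Tendsto
      (fun t : ℝ => t⁻¹ • (g (xh + t • v) - g xh - t • g' v)) (𝓝[>] 0) (𝓝 0))
    (hgc : ContinuousAt g xh)
    (C : Set (Y → ℝ)) (D : (Y → ℝ) → Y →L[ℝ] ℝ)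
    (r : NNReal) (ε : ℝ) (hε : 0 < ε)
    (hlip : ∀ φ ∈ C, LipschitzOnWith r φ (Metric.ball (g xh) ε))
    (hequi : EquiGateauxAt C D (g xh)) :
    (IsCompact (wcch (D '' C)) ∧
      wcch (D '' C) ⊆ toWD '' Metric.closedBall (0 : Y →L[ℝ] ℝ) (r : ℝ)) ∧
    (∀ φ ∈ C, HasGateauxAt (φ ∘ g) ((D φ).comp g') xh) ∧
    (∀ v : E, ∀ ε' : ℝ, 0 < ε' → ∃ δ : ℝ, 0 < δ ∧ ∀ t : ℝ, 0 < t → t < δ →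
      ∀ φ ∈ C, |(φ (g (xh + t • v)) - φ (g xh) - t * ((D φ).comp g') v) / t| ≤ ε') := by
  obtain ⟨heq1, heq2⟩ := hequi
  set y := g xh with hy
  -- Step 1: each differential has norm at most r
  have hDnorm : ∀ φ ∈ C, ‖D φ‖ ≤ (r : ℝ) := by
    intro φ hφ
    refine ContinuousLinearMap.opNorm_le_bound _ r.coe_nonneg ?_
    intro w
    have htend := heq1 φ hφ w
    have h2 : Tendsto (fun t : ℝ => |(φ (y + t • w) - φ y) / t|) (𝓝[>] 0)
        (𝓝 |D φ w|) := by
      have h2' : Tendsto (fun t : ℝ => (φ (y + t • w) - φ y - t * D φ w) / t + D φ w)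
          (𝓝[>] 0) (𝓝 (0 + D φ w)) := htend.add tendsto_const_nhds
      rw [zero_add] at h2'
      refine (Tendsto.congr' ?_ h2').abs
      filter_upwards [self_mem_nhdsWithin] with t (ht : (0:ℝ) < t)
      field_simp
      ring
    have hev : ∀ᶠ t : ℝ in 𝓝[>] 0, |(φ (y + t • w) - φ y) / t| ≤ (r : ℝ) * ‖w‖ := by
      have hδpos : 0 < ε / (‖w‖ + 1) := by positivity
      filter_upwards [Ioo_mem_nhdsGT_of_mem (Set.left_mem_Ico.mpr hδpos)] with t ht
      obtain ⟨ht0, htδ⟩ := ht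
      have hmem : y + t • w ∈ Metric.ball y ε := by
        rw [Metric.mem_ball, dist_eq_norm, add_sub_cancel_left, norm_smul,
          Real.norm_eq_abs, abs_of_pos ht0]
        calc t * ‖w‖ ≤ t * (‖w‖ + 1) := by nlinarith [norm_nonneg w]
          _ < ε / (‖w‖ + 1) * (‖w‖ + 1) := by
              apply mul_lt_mul_of_pos_right htδ; positivity
          _ = ε := by field_simp
      have hd := (hlip φ hφ).dist_le_mul (y + t • w) hmem y (Metric.mem_ball_self hε)
      rw [Real.dist_eq, dist_eq_norm, add_sub_cancel_left, norm_smul,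
        Real.norm_eq_abs, abs_of_pos ht0] at hd
      rw [abs_div, abs_of_pos ht0, div_le_iff₀ ht0]
      calc |φ (y + t • w) - φ y| ≤ (r : ℝ) * (t * ‖w‖) := hd
        _ = (r : ℝ) * ‖w‖ * t := by ring
    exact le_of_tendsto h2 hev
  -- the ball in the weak dual
  have himg : toWD '' Metric.closedBall (0 : Y →L[ℝ] ℝ) (r : ℝ) =
      WeakDual.toStrongDual ⁻¹' Metric.closedBall (0 : StrongDual ℝ Y) (r : ℝ) := by
    ext ψ
    constructor
    · rintro ⟨φ, hφ, rfl⟩; exact hφ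
    · intro h; exact ⟨WeakDual.toStrongDual ψ, h, rfl⟩
  have hconv : Convex ℝ
      (WeakDual.toStrongDual ⁻¹' Metric.closedBall (0 : StrongDual ℝ Y) (r : ℝ)) := by
    intro ψ₁ h1 ψ₂ h2 a b ha hb hab
    simp only [Set.mem_preimage, map_add, map_smul] at *
    exact convex_closedBall _ _ h1 h2 ha hb hab
  have hsub : wcch (D '' C) ⊆ toWD '' Metric.closedBall (0 : Y →L[ℝ] ℝ) (r : ℝ) := by
    rw [wcch, himg]
    refine closure_minimal (convexHull_min ?_ hconv)
      (WeakDual.isClosed_closedBall (0 : StrongDual ℝ Y) (r : ℝ))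
    rintro ψ ⟨φ', ⟨φ, hφ, rfl⟩, rfl⟩
    show D φ ∈ Metric.closedBall (0 : StrongDual ℝ Y) (r : ℝ)
    exact Metric.mem_closedBall.mpr (by rw [dist_zero_right]; exact hDnorm φ hφ)
  have hcpt : IsCompact (wcch (D '' C)) := by
    refine (WeakDual.isCompact_closedBall (𝕜 := ℝ) (0 : StrongDual ℝ Y) (r : ℝ)).of_isClosed_subset
      isClosed_closure ?_
    rw [← himg]; exact hsub
  -- Step 2: the uniform chain rule estimate
  have part3 : ∀ v : E, ∀ ε' : ℝ, 0 < ε' → ∃ δ : ℝ, 0 < δ ∧ ∀ t : ℝ, 0 < t → t < δ →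
      ∀ φ ∈ C, |(φ (g (xh + t • v)) - φ (g xh) - t * ((D φ).comp g') v) / t| ≤ ε' := by
    intro v ε' hε'
    set w := g' v with hw
    obtain ⟨δ₁, hδ₁, h1⟩ := heq2 w (ε' / 2) (by positivity)
    set ρ := ε' / (2 * ((r : ℝ) + 1)) with hρdef
    have hρ : 0 < ρ := by positivity
    have hev : {t : ℝ | ‖t⁻¹ • (g (xh + t • v) - g xh - t • g' v)‖ < ρ} ∈ 𝓝[>] (0:ℝ) := by
      have := NormedAddCommGroup.tendsto_nhds_zero.mp (hg v) ρ hρ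
      exact this
    obtain ⟨u, hu, husub⟩ := mem_nhdsGT_iff_exists_Ioo_subset.mp hev
    set M := ‖w‖ + ρ + 1 with hM
    have hM0 : 0 < M := by positivity
    refine ⟨min δ₁ (min u (ε / M)), by
      refine lt_min hδ₁ (lt_min hu ?_); positivity, ?_⟩
    intro t ht0 htδ φ hφ
    have htδ₁ : t < δ₁ := lt_of_lt_of_le htδ (min_le_left _ _)
    have htu : t < u := lt_of_lt_of_le htδ ((min_le_right _ _).trans (min_le_left _ _))
    have htM : t < ε / M := lt_of_lt_of_le htδ ((min_le_right _ _).trans (min_le_right _ _))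
    have hue : ‖t⁻¹ • (g (xh + t • v) - g xh - t • g' v)‖ < ρ := husub ⟨ht0, htu⟩
    set z := t⁻¹ • (g (xh + t • v) - g xh - t • g' v) with hz
    have hzz : g (xh + t • v) = y + t • w + t • z := by
      rw [hz, smul_inv_smul₀ ht0.ne']
      rw [hy, hw]; abel
    have htM' : t * M < ε := by
      rw [lt_div_iff₀ hM0] at htM; exact htM
    have hmem1 : y + t • w ∈ Metric.ball y ε := by
      rw [Metric.mem_ball, dist_eq_norm, add_sub_cancel_left, norm_smul,
        Real.norm_eq_abs, abs_of_pos ht0]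
      calc t * ‖w‖ ≤ t * M := by nlinarith [norm_nonneg w]
        _ < ε := htM'
    have hmem2 : g (xh + t • v) ∈ Metric.ball y ε := by
      rw [Metric.mem_ball, dist_eq_norm, hzz]
      have : y + t • w + t • z - y = t • w + t • z := by abel
      rw [this]
      calc ‖t • w + t • z‖ ≤ ‖t • w‖ + ‖t • z‖ := norm_add_le _ _
        _ = t * ‖w‖ + t * ‖z‖ := by
            rw [norm_smul, norm_smul, Real.norm_eq_abs, abs_of_pos ht0]
        _ ≤ t * M := by nlinarith [norm_nonneg w, norm_nonneg z, hue.le]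
        _ < ε := htM'
    -- the Lipschitz estimate
    have hlipest : |φ (g (xh + t • v)) - φ (y + t • w)| ≤ t * ((r : ℝ) * ρ) := by
      have hd := (hlip φ hφ).dist_le_mul (g (xh + t • v)) hmem2 (y + t • w) hmem1
      rw [Real.dist_eq] at hd
      refine hd.trans ?_
      have : dist (g (xh + t • v)) (y + t • w) = t * ‖z‖ := by
        rw [dist_eq_norm, hzz]
        have h9 : y + t • w + t • z - (y + t • w) = t • z := by abel
        rw [h9, norm_smul, Real.norm_eq_abs, abs_of_pos ht0]
      rw [this]
      calc (r : ℝ) * (t * ‖z‖) = t * ((r : ℝ) * ‖z‖) := by ring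
        _ ≤ t * ((r : ℝ) * ρ) := by
            refine mul_le_mul_of_nonneg_left ?_ ht0.le
            exact mul_le_mul_of_nonneg_left hue.le r.coe_nonneg
    have hequiest : |(φ (y + t • w) - φ y - t * D φ w) / t| ≤ ε' / 2 :=
      h1 t ht0 htδ₁ φ hφ
    have hrρ : (r : ℝ) * ρ ≤ ε' / 2 := by
      rw [hρdef, ← mul_div_assoc, div_le_div_iff₀ (by positivity) (by norm_num : (0:ℝ) < 2)]
      nlinarith [r.coe_nonneg, hε'.le]
    have hcomp : ((D φ).comp g') v = D φ w := rfl
    rw [hcomp]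
    have hsplit : (φ (g (xh + t • v)) - φ (g xh) - t * D φ w) / t =
        (φ (g (xh + t • v)) - φ (y + t • w)) / t + (φ (y + t • w) - φ y - t * D φ w) / t := by
      field_simp
      ring
    rw [hsplit]
    calc |(φ (g (xh + t • v)) - φ (y + t • w)) / t + (φ (y + t • w) - φ y - t * D φ w) / t|
        ≤ |(φ (g (xh + t • v)) - φ (y + t • w)) / t| + |(φ (y + t • w) - φ y - t * D φ w) / t| :=
          abs_add_le _ _
      _ ≤ ε' / 2 + ε' / 2 := by
          refine add_le_add ?_ hequiest
          rw [abs_div, abs_of_pos ht0, div_le_iff₀ ht0]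
          calc |φ (g (xh + t • v)) - φ (y + t • w)| ≤ t * ((r : ℝ) * ρ) := hlipest
            _ ≤ t * (ε' / 2) := mul_le_mul_of_nonneg_left hrρ ht0.le
            _ = ε' / 2 * t := by ring
      _ = ε' := by ring
  refine ⟨⟨hcpt, hsub⟩, ?_, part3⟩
  -- Step 3: pointwise Gateaux differentiability of the composition
  intro φ hφ v'
  have key : Tendsto (fun t : ℝ =>
      (φ (g (xh + t • v')) - φ (g xh) - t * ((D φ).comp g') v') / t) (𝓝[>] 0) (𝓝 0) := by
    rw [Metric.tendsto_nhds]
    intro ε' hε'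
    obtain ⟨δ, hδ, h⟩ := part3 v' (ε' / 2) (half_pos hε')
    filter_upwards [Ioo_mem_nhdsGT_of_mem (Set.left_mem_Ico.mpr hδ)] with t ht
    rw [Real.dist_eq, sub_zero]
    exact lt_of_le_of_lt (h t ht.1 ht.2 φ hφ) (half_lt_self hε')
  simpa [Function.comp_apply] using key
end
end
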